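/- Fix parameters (c_σ, b_σ), (c_μ, b_μ), (c_ν, b_ν) with c_σ, c_μ, c_ν > 0 and b_σ, b_μ, b_ν ∈ ℝ∖{0}, and let Φ be the associated phase. Then there exist constants C₀ ≥ 1 and c₀ > 0, depending only on the speeds and masses, such that for all ξ, η ∈ ℝ³ with |ξ| ≥ C₀ and |ξ| ≥ C₀|ξ−η|, one has |Φ(ξ,η)| + |∇_ηΦ(ξ,η)| ≥ c₀ (1 + |ξ−η|)^{−2}. -/

import Mathlib

noncomputable section

abbrev E3 : Type := EuclideanSpace ℝ (Fin 3)

/-- `Λ_τ(ξ) = sgn(b_τ)·√(c_τ²|ξ|² + b_τ²)`. -/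
def Lam3 (c b : ℝ) (ξ : E3) : ℝ := Real.sign b * Real.sqrt (c ^ 2 * ‖ξ‖ ^ 2 + b ^ 2)

/-- The phase `Φ(ξ,η) = Λ_σ(ξ) − Λ_μ(ξ−η) − Λ_ν(η)`. -/
def Phi3 (cσ bσ cμ bμ cν bν : ℝ) (ξ η : E3) : ℝ :=
  Lam3 cσ bσ ξ - Lam3 cμ bμ (ξ - η) - Lam3 cν bν η

namespace Aux14

lemma sq_lb (c b t : ℝ) : c*t ≤ Real.sqrt (c^2*t^2+b^2) := by
  have h := Real.sq_sqrt (show (0:ℝ) ≤ c^2*t^2+b^2 by positivity)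
  have h2 := Real.sqrt_nonneg (c^2*t^2+b^2)
  nlinarith [sq_nonneg (Real.sqrt (c^2*t^2+b^2) - c*t), sq_nonneg (Real.sqrt (c^2*t^2+b^2) + c*t)]

lemma sq_lb' (c b t : ℝ) : |b| ≤ Real.sqrt (c^2*t^2+b^2) := by
  rw [← Real.sqrt_sq_eq_abs]
  exact Real.sqrt_le_sqrt (by nlinarith [sq_nonneg (c*t)])

lemma sq_ub (c b t : ℝ) (hc : 0 ≤ c) (ht : 0 ≤ t) : Real.sqrt (c^2*t^2+b^2) ≤ c*t + |b| := by
  rw [show c^2*t^2+b^2 = (c*t)^2 + |b|^2 by rw [sq_abs]; ring]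
  calc Real.sqrt ((c*t)^2 + |b|^2) ≤ Real.sqrt ((c*t + |b|)^2) := by
        apply Real.sqrt_le_sqrt; nlinarith [abs_nonneg b, mul_nonneg hc ht]
    _ = c*t + |b| := Real.sqrt_sq (by positivity)

lemma sq_pos (c b t : ℝ) (hb : b ≠ 0) : 0 < Real.sqrt (c^2*t^2+b^2) :=
  lt_of_lt_of_le (abs_pos.mpr hb) (sq_lb' c b t)

lemma sign_abs_one {b : ℝ} (hb : b ≠ 0) : |Real.sign b| = 1 := by
  rcases lt_or_gt_of_ne hb with h | h
  · rw [Real.sign_of_neg h]; norm_num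
  · rw [Real.sign_of_pos h]; norm_num

lemma sign_pm {b : ℝ} (hb : b ≠ 0) : Real.sign b = 1 ∨ Real.sign b = -1 := by
  rcases lt_or_gt_of_ne hb with h | h
  · exact Or.inr (Real.sign_of_neg h)
  · exact Or.inl (Real.sign_of_pos h)

lemma KN_diff (c bσ bν x y r : ℝ) (hc : 0 < c) (hx : 0 < x) (hy : 0 ≤ y)
    (h1 : x - y ≤ r) (h2 : y - x ≤ r) :
    Real.sqrt (c^2*x^2+bσ^2) - Real.sqrt (c^2*y^2+bν^2) ≤ c*r + |bσ^2-bν^2|/(c*x) ∧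
    Real.sqrt (c^2*y^2+bν^2) - Real.sqrt (c^2*x^2+bσ^2) ≤ c*r + |bσ^2-bν^2|/(c*x) := by
  set K := Real.sqrt (c^2*x^2+bσ^2) with hK
  set N := Real.sqrt (c^2*y^2+bν^2) with hN
  have hK2 := Real.sq_sqrt (show (0:ℝ) ≤ c^2*x^2+bσ^2 by positivity)
  have hN2 := Real.sq_sqrt (show (0:ℝ) ≤ c^2*y^2+bν^2 by positivity)
  have hKlb : c*x ≤ K := sq_lb c bσ x
  have hNlb : c*y ≤ N := sq_lb c bν y
  have hr0 : 0 ≤ r := by linarith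
  have hcx : 0 < c*x := by positivity
  have h3 : c*x ≤ K + N := by nlinarith
  have hsum : c*(x+y) ≤ K+N := by nlinarith
  have habs1 : bσ^2 - bν^2 ≤ |bσ^2-bν^2| := le_abs_self _
  have habs2 : -(bσ^2 - bν^2) ≤ |bσ^2-bν^2| := neg_le_abs _
  have key : ∀ s : ℝ, s*(K+N) ≤ c*r*(K+N) + |bσ^2-bν^2| → s ≤ c*r + |bσ^2-bν^2|/(c*x) := by
    intro s hs
    rcases le_or_gt s (c*r) with h | h
    · have : (0:ℝ) ≤ |bσ^2-bν^2|/(c*x) := by positivity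
      linarith
    · have h4 : (s - c*r)*(c*x) ≤ (s - c*r)*(K+N) :=
        mul_le_mul_of_nonneg_left h3 (by linarith)
      have h5 : (s - c*r)*(K+N) ≤ |bσ^2-bν^2| := by nlinarith
      have h6 : s - c*r ≤ |bσ^2-bν^2|/(c*x) := (le_div_iff₀ hcx).mpr (h4.trans h5)
      linarith
  have hp : c^2*(r*(x+y)) ≤ c*r*(K+N) := by
    nlinarith [mul_le_mul_of_nonneg_left hsum (mul_nonneg hc.le hr0)]
  constructor
  · apply key
    have e1 : (K-N)*(K+N) = c^2*x^2+bσ^2 - (c^2*y^2+bν^2) := by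
      have : (K-N)*(K+N) = K^2 - N^2 := by ring
      rw [this, hK2, hN2]
    have p1 : c^2*(x^2-y^2) ≤ c^2*(r*(x+y)) := by
      nlinarith [mul_le_mul_of_nonneg_right h1 (show (0:ℝ) ≤ x+y by linarith)]
    linarith
  · apply key
    have e1 : (N-K)*(K+N) = c^2*y^2+bν^2 - (c^2*x^2+bσ^2) := by
      have : (N-K)*(K+N) = N^2 - K^2 := by ring
      rw [this, hK2, hN2]
    have p1 : c^2*(y^2-x^2) ≤ c^2*(r*(x+y)) := by
      nlinarith [mul_le_mul_of_nonneg_right h2 (show (0:ℝ) ≤ x+y by linarith)]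
    linarith

lemma M_lb (c cμ bμ r : ℝ) (hbμ : bμ ≠ 0) (hc : 0 ≤ c) (hccμ : c ≤ cμ) (hr : 0 ≤ r) :
    c*r + bμ^2/(2*(cμ+|bμ|)*(1+r)) ≤ Real.sqrt (cμ^2*r^2+bμ^2) := by
  set M := Real.sqrt (cμ^2*r^2+bμ^2) with hM
  have hM2 := Real.sq_sqrt (show (0:ℝ) ≤ cμ^2*r^2+bμ^2 by positivity)
  have hMlb : cμ*r ≤ M := sq_lb cμ bμ r
  have hMub : M ≤ cμ*r + |bμ| := sq_ub cμ bμ r (by linarith) hr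
  have habs : 0 ≤ |bμ| := abs_nonneg bμ
  have habs' : 0 < |bμ| := abs_pos.mpr hbμ
  have hcμ0 : 0 ≤ cμ := hc.trans hccμ
  have hD : (0:ℝ) < 2*(cμ+|bμ|)*(1+r) := by nlinarith
  have hcc : c^2*r^2 ≤ cμ^2*r^2 := by nlinarith [sq_nonneg r, mul_le_mul hccμ hccμ hc hcμ0]
  have hMcr : c*r ≤ M := by nlinarith
  rw [← sub_nonneg]
  have key : bμ^2 ≤ (M - c*r) * (2*(cμ+|bμ|)*(1+r)) := by
    have h1 : (M - c*r)*(M + c*r) = M^2 - c^2*r^2 := by ring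
    have h2 : bμ^2 ≤ (M - c*r)*(M + c*r) := by rw [h1]; nlinarith
    have h3 : M + c*r ≤ 2*(cμ+|bμ|)*(1+r) := by nlinarith
    nlinarith [mul_le_mul_of_nonneg_left h3 (show (0:ℝ) ≤ M - c*r by linarith)]
  have := (div_le_iff₀ hD).mpr key
  linarith

lemma abs_comb_lb (s t A B : ℝ) (hs : |s| = 1) (ht : |t| = 1) (hB : 0 ≤ B) :
    |A| - B ≤ |s*A - t*B| ∧ B - |A| ≤ |s*A - t*B| := by
  have h1 : |s*A| = |A| := by rw [abs_mul, hs, one_mul]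
  have h2 : |t*B| = B := by rw [abs_mul, ht, one_mul, abs_of_nonneg hB]
  constructor
  · calc |A| - B = |s*A| - |t*B| := by rw [h1, h2]
      _ ≤ |s*A - t*B| := abs_sub_abs_le_abs_sub _ _
  · calc B - |A| = |t*B| - |s*A| := by rw [h1, h2]
      _ ≤ |t*B - s*A| := abs_sub_abs_le_abs_sub _ _
      _ = |s*A - t*B| := abs_sub_comm _ _

lemma div_trick (a d x : ℝ) (hd : 0 < d) (h : a/d ≤ x) : a ≤ d*x := by
  rw [div_le_iff₀ hd] at h; linarith

lemma zpow_facts (r : ℝ) (hr : 0 ≤ r) :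
    (0:ℝ) ≤ (1+r)^(-2:ℤ) ∧ (1+r)^(-2:ℤ) ≤ (1+r)⁻¹ ∧ (1+r)^(-2:ℤ) ≤ 1 := by
  have h1 : (0:ℝ) < 1+r := by linarith
  have e : (1+r:ℝ)^(-2:ℤ) = ((1+r)^2)⁻¹ := by
    rw [zpow_neg]; norm_cast
  have h2 : (1:ℝ) ≤ (1+r)^2 := by nlinarith
  have h3 : (1+r:ℝ) ≤ (1+r)^2 := by nlinarith
  have hp2 : (0:ℝ) < (1+r)^2 := by positivity
  refine ⟨by rw [e]; positivity, ?_, ?_⟩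
  · rw [e]; exact inv_anti₀ h1 h3
  · rw [e]
    have := inv_anti₀ one_pos h2
    simpa using this

lemma sqrtfun_deriv (c b : ℝ) (hb : b ≠ 0) (z : E3) :
    HasFDerivAt (fun y : E3 => Real.sqrt (c^2*‖y‖^2+b^2))
      ((c^2 / Real.sqrt (c^2*‖z‖^2+b^2)) • (innerSL ℝ z : E3 →L[ℝ] ℝ)) z := by
  have hpos : 0 < c^2*‖z‖^2+b^2 := by positivity
  have h1 : HasFDerivAt (fun y : E3 => (inner ℝ y y : ℝ))
      ((fderivInnerCLM ℝ ((z : E3), z)).comp ((ContinuousLinearMap.id ℝ E3).prod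
        (ContinuousLinearMap.id ℝ E3))) z :=
    (hasFDerivAt_id z).inner ℝ (hasFDerivAt_id z)
  have h2 : HasFDerivAt (fun y : E3 => c^2*‖y‖^2+b^2)
      (c^2 • ((fderivInnerCLM ℝ ((z : E3), z)).comp ((ContinuousLinearMap.id ℝ E3).prod
        (ContinuousLinearMap.id ℝ E3)))) z := by
    have h := (h1.const_mul (c^2)).add_const (b^2)
    have e : (fun y : E3 => c^2 * (inner ℝ y y : ℝ) + b^2) = fun y : E3 => c^2*‖y‖^2+b^2 := by
      funext y; rw [real_inner_self_eq_norm_sq]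
    rwa [e] at h
  have h3 := (Real.hasDerivAt_sqrt (ne_of_gt hpos)).comp_hasFDerivAt z h2
  refine h3.congr_fderiv ?_
  ext u
  simp only [ContinuousLinearMap.smul_apply, ContinuousLinearMap.comp_apply,
    ContinuousLinearMap.prod_apply, ContinuousLinearMap.id_apply, fderivInnerCLM_apply,
    innerSL_apply_apply, smul_eq_mul, real_inner_comm u z]
  ring

lemma grad_inner (cσ bσ cμ bμ cν bν : ℝ) (hbμ : bμ ≠ 0) (hbν : bν ≠ 0) (ξ η : E3) :
    (inner ℝ (gradient (fun y => Phi3 cσ bσ cμ bμ cν bν ξ y) η) η : ℝ) =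
      Real.sign bμ * cμ^2 / Real.sqrt (cμ^2*‖ξ-η‖^2+bμ^2) * (inner ℝ (ξ-η) η : ℝ)
        - Real.sign bν * cν^2 / Real.sqrt (cν^2*‖η‖^2+bν^2) * ‖η‖^2 := by
  have hsub : HasFDerivAt (fun y : E3 => ξ - y) (-(ContinuousLinearMap.id ℝ E3)) η :=
    (hasFDerivAt_id η).const_sub ξ
  have hμ := ((sqrtfun_deriv cμ bμ hbμ (ξ - η)).comp η hsub).const_mul (Real.sign bμ)
  have hν := (sqrtfun_deriv cν bν hbν η).const_mul (Real.sign bν)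
  have hΦ := ((hasFDerivAt_const (Lam3 cσ bσ ξ) η).sub hμ).sub hν
  have hΦ' : HasFDerivAt (fun y => Phi3 cσ bσ cμ bμ cν bν ξ y)
      (0 - Real.sign bμ • (((cμ^2 / Real.sqrt (cμ^2*‖ξ-η‖^2+bμ^2)) •
          (innerSL ℝ (ξ-η) : E3 →L[ℝ] ℝ)).comp (-(ContinuousLinearMap.id ℝ E3)))
        - Real.sign bν • ((cν^2 / Real.sqrt (cν^2*‖η‖^2+bν^2)) •
          (innerSL ℝ η : E3 →L[ℝ] ℝ))) η := by
    exact hΦ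
  have hG := hasFDerivAt_iff_hasGradientAt.mp hΦ'
  rw [hG.gradient, InnerProductSpace.toDual_symm_apply]
  simp only [ContinuousLinearMap.sub_apply, ContinuousLinearMap.zero_apply,
    ContinuousLinearMap.smul_apply, ContinuousLinearMap.comp_apply,
    ContinuousLinearMap.neg_apply, ContinuousLinearMap.id_apply, innerSL_apply_apply,
    smul_eq_mul, inner_neg_right, real_inner_self_eq_norm_sq]
  ring

end Aux14

set_option maxHeartbeats 1000000 in
private lemma case_A (cσ bσ cμ bμ cν bν : ℝ)
    (hcσ : 0 < cσ) (hcμ : 0 < cμ) (hcν : 0 < cν)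
    (hbσ : bσ ≠ 0) (hbμ : bμ ≠ 0) (hbν : bν ≠ 0)
    (hss : Real.sign bσ ≠ Real.sign bν) :
    ∃ C₀ : ℝ, 1 ≤ C₀ ∧ ∃ c₀ : ℝ, 0 < c₀ ∧
      ∀ ξ η : E3, C₀ ≤ ‖ξ‖ → C₀ * ‖ξ - η‖ ≤ ‖ξ‖ →
        c₀ * (1 + ‖ξ - η‖) ^ (-2 : ℤ) ≤
          |Phi3 cσ bσ cμ bμ cν bν ξ η| +
            ‖gradient (fun y => Phi3 cσ bσ cμ bμ cν bν ξ y) η‖ := by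
  have haσ := Aux14.sign_abs_one hbσ
  have haμ := Aux14.sign_abs_one hbμ
  have hνσ : Real.sign bν = -Real.sign bσ := by
    rcases Aux14.sign_pm hbσ with h | h <;> rcases Aux14.sign_pm hbν with h' | h' <;>
      rw [h, h'] at hss ⊢ <;> norm_num at *
  have hp1 : (0:ℝ) ≤ 2*cμ/cσ := by positivity
  have hp2 : (0:ℝ) ≤ 2*(|bμ|+1)/cσ := by positivity
  refine ⟨2 + 2*cμ/cσ + 2*(|bμ|+1)/cσ, by linarith, 1, one_pos, ?_⟩
  intro ξ η hx hrx
  have hr0 : (0:ℝ) ≤ ‖ξ - η‖ := norm_nonneg _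
  have hPhi : Phi3 cσ bσ cμ bμ cν bν ξ η
      = Real.sign bσ * Real.sqrt (cσ^2*‖ξ‖^2+bσ^2)
        - Real.sign bμ * Real.sqrt (cμ^2*‖ξ-η‖^2+bμ^2)
        - Real.sign bν * Real.sqrt (cν^2*‖η‖^2+bν^2) := rfl
  have hKlb := Aux14.sq_lb cσ bσ ‖ξ‖
  have hN0 := Real.sqrt_nonneg (cν^2*‖η‖^2+bν^2)
  have hK0 := Real.sqrt_nonneg (cσ^2*‖ξ‖^2+bσ^2)
  have hMub := Aux14.sq_ub cμ bμ ‖ξ-η‖ hcμ.le hr0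
  have key : Real.sqrt (cσ^2*‖ξ‖^2+bσ^2) + Real.sqrt (cν^2*‖η‖^2+bν^2)
      - Real.sqrt (cμ^2*‖ξ-η‖^2+bμ^2) ≤ |Phi3 cσ bσ cμ bμ cν bν ξ η| := by
    have h := (Aux14.abs_comb_lb (Real.sign bσ) (Real.sign bμ)
      (Real.sqrt (cσ^2*‖ξ‖^2+bσ^2) + Real.sqrt (cν^2*‖η‖^2+bν^2))
      (Real.sqrt (cμ^2*‖ξ-η‖^2+bμ^2)) haσ haμ (Real.sqrt_nonneg _)).1
    have e : Real.sign bσ * (Real.sqrt (cσ^2*‖ξ‖^2+bσ^2) + Real.sqrt (cν^2*‖η‖^2+bν^2))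
        - Real.sign bμ * Real.sqrt (cμ^2*‖ξ-η‖^2+bμ^2)
        = Phi3 cσ bσ cμ bμ cν bν ξ η := by rw [hPhi, hνσ]; ring
    rw [e] at h
    have habs : |Real.sqrt (cσ^2*‖ξ‖^2+bσ^2) + Real.sqrt (cν^2*‖η‖^2+bν^2)|
        = Real.sqrt (cσ^2*‖ξ‖^2+bσ^2) + Real.sqrt (cν^2*‖η‖^2+bν^2) :=
      abs_of_nonneg (by linarith)
    rw [habs] at h
    exact h
  -- numeric bounds
  have h1 : 2*cμ/cσ*‖ξ-η‖ ≤ ‖ξ‖ :=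
    le_trans (mul_le_mul_of_nonneg_right (by linarith) hr0) hrx
  have h1' : 2*(cμ*‖ξ-η‖) ≤ cσ*‖ξ‖ := by
    have e : 2*cμ/cσ*‖ξ-η‖ = (2*(cμ*‖ξ-η‖))/cσ := by ring
    rw [e] at h1
    exact Aux14.div_trick _ _ _ hcσ h1
  have h2 : 2*(|bμ|+1) ≤ cσ*‖ξ‖ :=
    Aux14.div_trick _ _ _ hcσ (by linarith)
  have hone : (1:ℝ) ≤ |Phi3 cσ bσ cμ bμ cν bν ξ η| := by linarith
  have hzp := Aux14.zpow_facts ‖ξ-η‖ hr0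
  have hg0 : (0:ℝ) ≤ ‖gradient (fun y => Phi3 cσ bσ cμ bμ cν bν ξ y) η‖ := norm_nonneg _
  rw [one_mul]
  linarith [hzp.2.2]

set_option maxHeartbeats 1000000 in
private lemma case_B1 (cσ bσ cμ bμ cν bν : ℝ)
    (hcσ : 0 < cσ) (hcμ : 0 < cμ) (hcν : 0 < cν)
    (hbσ : bσ ≠ 0) (hbμ : bμ ≠ 0) (hbν : bν ≠ 0)
    (hss : Real.sign bσ = Real.sign bν) (hcc : cσ ≠ cν) :
    ∃ C₀ : ℝ, 1 ≤ C₀ ∧ ∃ c₀ : ℝ, 0 < c₀ ∧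
      ∀ ξ η : E3, C₀ ≤ ‖ξ‖ → C₀ * ‖ξ - η‖ ≤ ‖ξ‖ →
        c₀ * (1 + ‖ξ - η‖) ^ (-2 : ℤ) ≤
          |Phi3 cσ bσ cμ bμ cν bν ξ η| +
            ‖gradient (fun y => Phi3 cσ bσ cμ bμ cν bν ξ y) η‖ := by
  have haσ := Aux14.sign_abs_one hbσ
  have haμ := Aux14.sign_abs_one hbμ
  -- uniform treatment via d := |cσ - cν|
  have hd : (0:ℝ) < |cσ - cν| := abs_pos.mpr (sub_ne_zero.mpr hcc)
  have hp1 : (0:ℝ) ≤ (2*cν+2*cμ)/|cσ-cν| := by positivity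
  have hp2 : (0:ℝ) ≤ (2*(|bσ|+|bν|+|bμ|)+2)/|cσ-cν| := by positivity
  refine ⟨2 + (2*cν+2*cμ)/|cσ-cν| + (2*(|bσ|+|bν|+|bμ|)+2)/|cσ-cν|, by linarith, 1, one_pos, ?_⟩
  intro ξ η hx hrx
  have hr0 : (0:ℝ) ≤ ‖ξ - η‖ := norm_nonneg _
  have hy0 : (0:ℝ) ≤ ‖η‖ := norm_nonneg _
  have hPhi : Phi3 cσ bσ cμ bμ cν bν ξ η
      = Real.sign bσ * Real.sqrt (cσ^2*‖ξ‖^2+bσ^2)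
        - Real.sign bμ * Real.sqrt (cμ^2*‖ξ-η‖^2+bμ^2)
        - Real.sign bν * Real.sqrt (cν^2*‖η‖^2+bν^2) := rfl
  have hKlb := Aux14.sq_lb cσ bσ ‖ξ‖
  have hNlb := Aux14.sq_lb cν bν ‖η‖
  have hKub := Aux14.sq_ub cσ bσ ‖ξ‖ hcσ.le (norm_nonneg ξ)
  have hNub := Aux14.sq_ub cν bν ‖η‖ hcν.le hy0
  have hMub := Aux14.sq_ub cμ bμ ‖ξ-η‖ hcμ.le hr0
  have hyx1 : ‖ξ‖ - ‖η‖ ≤ ‖ξ-η‖ := norm_sub_norm_le ξ η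
  have hyx2 : ‖η‖ - ‖ξ‖ ≤ ‖ξ-η‖ := by
    have := norm_sub_norm_le η ξ; rwa [norm_sub_rev] at this
  have key : |Real.sqrt (cσ^2*‖ξ‖^2+bσ^2) - Real.sqrt (cν^2*‖η‖^2+bν^2)|
      - Real.sqrt (cμ^2*‖ξ-η‖^2+bμ^2) ≤ |Phi3 cσ bσ cμ bμ cν bν ξ η| := by
    have h := (Aux14.abs_comb_lb (Real.sign bσ) (Real.sign bμ)
      (Real.sqrt (cσ^2*‖ξ‖^2+bσ^2) - Real.sqrt (cν^2*‖η‖^2+bν^2))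
      (Real.sqrt (cμ^2*‖ξ-η‖^2+bμ^2)) haσ haμ (Real.sqrt_nonneg _)).1
    have e : Real.sign bσ * (Real.sqrt (cσ^2*‖ξ‖^2+bσ^2) - Real.sqrt (cν^2*‖η‖^2+bν^2))
        - Real.sign bμ * Real.sqrt (cμ^2*‖ξ-η‖^2+bμ^2)
        = Phi3 cσ bσ cμ bμ cν bν ξ η := by rw [hPhi, ← hss]; ring
    rw [e] at h
    exact h
  -- numeric bounds
  have h1 : (2*cν+2*cμ)/|cσ-cν| *‖ξ-η‖ ≤ ‖ξ‖ :=
    le_trans (mul_le_mul_of_nonneg_right (by linarith) hr0) hrx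
  have h1' : 2*cν*‖ξ-η‖ + 2*cμ*‖ξ-η‖ ≤ |cσ-cν| *‖ξ‖ := by
    have e : (2*cν+2*cμ)/|cσ-cν| *‖ξ-η‖ = (2*cν*‖ξ-η‖ + 2*cμ*‖ξ-η‖)/|cσ-cν| := by ring
    rw [e] at h1
    exact Aux14.div_trick _ _ _ hd h1
  have h2 : 2*(|bσ|+|bν|+|bμ|)+2 ≤ |cσ-cν| *‖ξ‖ :=
    Aux14.div_trick _ _ _ hd (by linarith)
  have habsle : |cσ-cν| *‖ξ‖ ≤ |Real.sqrt (cσ^2*‖ξ‖^2+bσ^2) - Real.sqrt (cν^2*‖η‖^2+bν^2)|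
      + cν*‖ξ-η‖ + (|bσ|+|bν|) := by
    rcases abs_cases (cσ - cν) with ⟨e, _⟩ | ⟨e, he⟩
    · -- |cσ-cν| = cσ-cν : use K - N lower bound
      rw [e]
      have hNle : cν*‖η‖ ≤ cν*(‖ξ‖+‖ξ-η‖) := mul_le_mul_of_nonneg_left (by linarith) hcν.le
      have h3 : (cσ-cν)*‖ξ‖ ≤ (Real.sqrt (cσ^2*‖ξ‖^2+bσ^2) - Real.sqrt (cν^2*‖η‖^2+bν^2))
          + cν*‖ξ-η‖ + (|bσ|+|bν|) := by linarith only [hKlb, hNub, hNle, abs_nonneg bσ]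
      have h4 := le_abs_self (Real.sqrt (cσ^2*‖ξ‖^2+bσ^2) - Real.sqrt (cν^2*‖η‖^2+bν^2))
      linarith
    · rw [e, neg_sub]
      have hNge : cν*(‖ξ‖-‖ξ-η‖) ≤ cν*‖η‖ := mul_le_mul_of_nonneg_left (by linarith) hcν.le
      have h3 : (cν-cσ)*‖ξ‖ ≤ (Real.sqrt (cν^2*‖η‖^2+bν^2) - Real.sqrt (cσ^2*‖ξ‖^2+bσ^2))
          + cν*‖ξ-η‖ + (|bσ|+|bν|) := by linarith only [hNlb, hKub, hNge, abs_nonneg bν]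
      have h4 := neg_abs_le (Real.sqrt (cσ^2*‖ξ‖^2+bσ^2) - Real.sqrt (cν^2*‖η‖^2+bν^2))
      linarith
  have hone : (1:ℝ) ≤ |Phi3 cσ bσ cμ bμ cν bν ξ η| := by
    linarith only [key, habsle, hMub, h1', h2, hr0]
  have hzp := Aux14.zpow_facts ‖ξ-η‖ hr0
  have hg0 : (0:ℝ) ≤ ‖gradient (fun y => Phi3 cσ bσ cμ bμ cν bν ξ y) η‖ := norm_nonneg _
  rw [one_mul]
  linarith only [hzp.2.2, hone, hg0]

set_option maxHeartbeats 1000000 in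
private lemma case_B2 (cσ bσ cμ bμ cν bν : ℝ)
    (hcσ : 0 < cσ) (hcμ : 0 < cμ)
    (hbσ : bσ ≠ 0) (hbμ : bμ ≠ 0) (hbν : bν ≠ 0)
    (hss : Real.sign bσ = Real.sign bν) (hcc : cσ = cν) (hcm : cν ≤ cμ) :
    ∃ C₀ : ℝ, 1 ≤ C₀ ∧ ∃ c₀ : ℝ, 0 < c₀ ∧
      ∀ ξ η : E3, C₀ ≤ ‖ξ‖ → C₀ * ‖ξ - η‖ ≤ ‖ξ‖ →
        c₀ * (1 + ‖ξ - η‖) ^ (-2 : ℤ) ≤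
          |Phi3 cσ bσ cμ bμ cν bν ξ η| +
            ‖gradient (fun y => Phi3 cσ bσ cμ bμ cν bν ξ y) η‖ := by
  subst hcc
  have haσ := Aux14.sign_abs_one hbσ
  have haμ := Aux14.sign_abs_one hbμ
  have hbμ2 : (0:ℝ) < bμ^2 := lt_of_le_of_ne (sq_nonneg bμ) (Ne.symm (pow_ne_zero 2 hbμ))
  have hden : (0:ℝ) < 4*(cμ+|bμ|) := by positivity
  have hβ : (0:ℝ) < bμ^2/(4*(cμ+|bμ|)) := div_pos hbμ2 hden
  have hcβ : (0:ℝ) < cσ * (bμ^2/(4*(cμ+|bμ|))) := mul_pos hcσ hβ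
  have hp1 : (0:ℝ) ≤ 2*|bσ^2-bν^2|/(cσ * (bμ^2/(4*(cμ+|bμ|)))) :=
    div_nonneg (by positivity) hcβ.le
  refine ⟨2 + 2*|bσ^2-bν^2|/(cσ * (bμ^2/(4*(cμ+|bμ|)))), by linarith,
    bμ^2/(4*(cμ+|bμ|)), hβ, ?_⟩
  intro ξ η hx hrx
  have hr0 : (0:ℝ) ≤ ‖ξ - η‖ := norm_nonneg _
  have hy0 : (0:ℝ) ≤ ‖η‖ := norm_nonneg _
  have hx0 : (0:ℝ) < ‖ξ‖ := lt_of_lt_of_le (by linarith) hx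
  have hPhi : Phi3 cσ bσ cμ bμ cσ bν ξ η
      = Real.sign bσ * Real.sqrt (cσ^2*‖ξ‖^2+bσ^2)
        - Real.sign bμ * Real.sqrt (cμ^2*‖ξ-η‖^2+bμ^2)
        - Real.sign bν * Real.sqrt (cσ^2*‖η‖^2+bν^2) := rfl
  have hyx1 : ‖ξ‖ - ‖η‖ ≤ ‖ξ-η‖ := norm_sub_norm_le ξ η
  have hyx2 : ‖η‖ - ‖ξ‖ ≤ ‖ξ-η‖ := by
    have := norm_sub_norm_le η ξ; rwa [norm_sub_rev] at this
  have hKN := Aux14.KN_diff cσ bσ bν ‖ξ‖ ‖η‖ ‖ξ-η‖ hcσ hx0 hy0 hyx1 hyx2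
  have habsKN : |Real.sqrt (cσ^2*‖ξ‖^2+bσ^2) - Real.sqrt (cσ^2*‖η‖^2+bν^2)|
      ≤ cσ*‖ξ-η‖ + |bσ^2-bν^2|/(cσ*‖ξ‖) := abs_sub_le_iff.mpr ⟨hKN.1, hKN.2⟩
  have hMlb := Aux14.M_lb cσ cμ bμ ‖ξ-η‖ hbμ hcσ.le hcm hr0
  have e2β : bμ^2/(2*(cμ+|bμ|)*(1+‖ξ-η‖)) = 2*(bμ^2/(4*(cμ+|bμ|))/(1+‖ξ-η‖)) := by
    have h1 : cμ+|bμ| ≠ 0 := by positivity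
    have h2 : (1:ℝ)+‖ξ-η‖ ≠ 0 := by positivity
    field_simp
    ring
  have key : Real.sqrt (cμ^2*‖ξ-η‖^2+bμ^2)
      - |Real.sqrt (cσ^2*‖ξ‖^2+bσ^2) - Real.sqrt (cσ^2*‖η‖^2+bν^2)|
      ≤ |Phi3 cσ bσ cμ bμ cσ bν ξ η| := by
    have h := (Aux14.abs_comb_lb (Real.sign bσ) (Real.sign bμ)
      (Real.sqrt (cσ^2*‖ξ‖^2+bσ^2) - Real.sqrt (cσ^2*‖η‖^2+bν^2))
      (Real.sqrt (cμ^2*‖ξ-η‖^2+bμ^2)) haσ haμ (Real.sqrt_nonneg _)).2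
    have e : Real.sign bσ * (Real.sqrt (cσ^2*‖ξ‖^2+bσ^2) - Real.sqrt (cσ^2*‖η‖^2+bν^2))
        - Real.sign bμ * Real.sqrt (cμ^2*‖ξ-η‖^2+bμ^2)
        = Phi3 cσ bσ cμ bμ cσ bν ξ η := by rw [hPhi, ← hss]; ring
    rw [e] at h
    exact h
  -- bound |Δ|/(cσ x) ≤ β/(1+r)
  have hC : 2*|bσ^2-bν^2| ≤ (cσ * (bμ^2/(4*(cμ+|bμ|))))
      * (2 + 2*|bσ^2-bν^2|/(cσ * (bμ^2/(4*(cμ+|bμ|))))) :=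
    Aux14.div_trick _ _ _ hcβ (by linarith)
  have hC0r : (2 + 2*|bσ^2-bν^2|/(cσ * (bμ^2/(4*(cμ+|bμ|))))) * (1+‖ξ-η‖) ≤ 2*‖ξ‖ := by
    linarith only [hx, hrx]
  have hΔ : |bσ^2-bν^2|/(cσ*‖ξ‖) ≤ (bμ^2/(4*(cμ+|bμ|)))/(1+‖ξ-η‖) := by
    rw [div_le_div_iff₀ (by positivity) (by positivity)]
    have h5 := mul_le_mul_of_nonneg_left hC0r hcβ.le
    have h6 := mul_le_mul_of_nonneg_right hC (show (0:ℝ) ≤ 1+‖ξ-η‖ by linarith)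
    linarith only [h5, h6]
  have hfin : (bμ^2/(4*(cμ+|bμ|)))/(1+‖ξ-η‖) ≤ |Phi3 cσ bσ cμ bμ cσ bν ξ η| := by
    rw [e2β] at hMlb
    linarith only [key, habsKN, hMlb, hΔ]
  have hzp := Aux14.zpow_facts ‖ξ-η‖ hr0
  have hg0 : (0:ℝ) ≤ ‖gradient (fun y => Phi3 cσ bσ cμ bμ cσ bν ξ y) η‖ := norm_nonneg _
  have hstep : (bμ^2/(4*(cμ+|bμ|))) * (1+‖ξ-η‖)^(-2:ℤ)
      ≤ (bμ^2/(4*(cμ+|bμ|))) * (1+‖ξ-η‖)⁻¹ :=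
    mul_le_mul_of_nonneg_left hzp.2.1 hβ.le
  have einv : (bμ^2/(4*(cμ+|bμ|))) * (1+‖ξ-η‖)⁻¹ = (bμ^2/(4*(cμ+|bμ|)))/(1+‖ξ-η‖) :=
    (div_eq_mul_inv _ _).symm
  linarith only [hstep, einv.le, einv.ge, hfin, hg0]

set_option maxHeartbeats 1000000 in
private lemma case_B3 (cσ bσ cμ bμ cν bν : ℝ)
    (hcσ : 0 < cσ) (hcμ : 0 < cμ)
    (hbσ : bσ ≠ 0) (hbμ : bμ ≠ 0) (hbν : bν ≠ 0)
    (hcc : cσ = cν) (hcm : cμ < cν) :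
    ∃ C₀ : ℝ, 1 ≤ C₀ ∧ ∃ c₀ : ℝ, 0 < c₀ ∧
      ∀ ξ η : E3, C₀ ≤ ‖ξ‖ → C₀ * ‖ξ - η‖ ≤ ‖ξ‖ →
        c₀ * (1 + ‖ξ - η‖) ^ (-2 : ℤ) ≤
          |Phi3 cσ bσ cμ bμ cν bν ξ η| +
            ‖gradient (fun y => Phi3 cσ bσ cμ bμ cν bν ξ y) η‖ := by
  subst hcc
  have haμ := Aux14.sign_abs_one hbμ
  have haν := Aux14.sign_abs_one hbν
  have hd : (0:ℝ) < cσ - cμ := by linarith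
  have hp1 : (0:ℝ) ≤ 4*|bν|/(cσ-cμ) := by positivity
  refine ⟨2 + 4*|bν|/(cσ-cμ), by linarith, (cσ-cμ)/2, by linarith, ?_⟩
  intro ξ η hx hrx
  have hr0 : (0:ℝ) ≤ ‖ξ - η‖ := norm_nonneg _
  have h2r : 2*‖ξ-η‖ ≤ ‖ξ‖ :=
    le_trans (mul_le_mul_of_nonneg_right (by linarith) hr0) hrx
  have hyx1 : ‖ξ‖ - ‖η‖ ≤ ‖ξ-η‖ := norm_sub_norm_le ξ η
  have hy2 : 2 + 4*|bν|/(cσ-cμ) ≤ 2*‖η‖ := by linarith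
  have hy0 : (0:ℝ) < ‖η‖ := by linarith
  have hyb : 2*|bν| ≤ (cσ-cμ)*‖η‖ := by
    have h := Aux14.div_trick (4*|bν|) (cσ-cμ) (2*‖η‖) hd (by linarith)
    nlinarith [h]
  set G := gradient (fun y => Phi3 cσ bσ cμ bμ cσ bν ξ y) η with hG
  have hgi := Aux14.grad_inner cσ bσ cμ bμ cσ bν hbμ hbν ξ η
  have hCS : |(inner ℝ G η : ℝ)| ≤ ‖G‖ * ‖η‖ := abs_real_inner_le_norm G η
  have hI : |(inner ℝ (ξ-η) η : ℝ)| ≤ ‖ξ-η‖ * ‖η‖ := abs_real_inner_le_norm (ξ-η) η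
  have hNpos : (0:ℝ) < Real.sqrt (cσ^2*‖η‖^2+bν^2) := Aux14.sq_pos cσ bν ‖η‖ hbν
  have hMpos : (0:ℝ) < Real.sqrt (cμ^2*‖ξ-η‖^2+bμ^2) := Aux14.sq_pos cμ bμ ‖ξ-η‖ hbμ
  have hNub := Aux14.sq_ub cσ bν ‖η‖ hcσ.le hy0.le
  have hMlb2 := Aux14.sq_lb cμ bμ ‖ξ-η‖
  -- lower bound on |⟪G,η⟫|
  have hlow : cσ^2/Real.sqrt (cσ^2*‖η‖^2+bν^2)*‖η‖^2
      - |cμ^2/Real.sqrt (cμ^2*‖ξ-η‖^2+bμ^2)*(inner ℝ (ξ-η) η : ℝ)|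
      ≤ |(inner ℝ G η : ℝ)| := by
    have h := (Aux14.abs_comb_lb (Real.sign bμ) (Real.sign bν)
      (cμ^2/Real.sqrt (cμ^2*‖ξ-η‖^2+bμ^2)*(inner ℝ (ξ-η) η : ℝ))
      (cσ^2/Real.sqrt (cσ^2*‖η‖^2+bν^2)*‖η‖^2) haμ haν (by positivity)).2
    have e : Real.sign bμ * (cμ^2/Real.sqrt (cμ^2*‖ξ-η‖^2+bμ^2)*(inner ℝ (ξ-η) η : ℝ))
        - Real.sign bν * (cσ^2/Real.sqrt (cσ^2*‖η‖^2+bν^2)*‖η‖^2)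
        = (inner ℝ G η : ℝ) := by rw [hgi]; ring
    rw [e] at h
    exact h
  have habsA : |cμ^2/Real.sqrt (cμ^2*‖ξ-η‖^2+bμ^2)*(inner ℝ (ξ-η) η : ℝ)|
      ≤ cμ^2/Real.sqrt (cμ^2*‖ξ-η‖^2+bμ^2)*(‖ξ-η‖*‖η‖) := by
    rw [abs_mul, abs_of_nonneg (show (0:ℝ) ≤ cμ^2/Real.sqrt (cμ^2*‖ξ-η‖^2+bμ^2) by positivity)]
    exact mul_le_mul_of_nonneg_left hI (by positivity)
  have hMr : cμ^2/Real.sqrt (cμ^2*‖ξ-η‖^2+bμ^2)*(‖ξ-η‖*‖η‖) ≤ cμ*‖η‖ := by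
    rw [div_mul_eq_mul_div, div_le_iff₀ hMpos]
    have h := mul_le_mul_of_nonneg_left hMlb2 hcμ.le
    nlinarith [mul_le_mul_of_nonneg_right h hy0.le]
  have hNy : (cσ+cμ)/2*‖η‖ ≤ cσ^2/Real.sqrt (cσ^2*‖η‖^2+bν^2)*‖η‖^2 := by
    rw [show cσ^2/Real.sqrt (cσ^2*‖η‖^2+bν^2)*‖η‖^2
      = cσ^2*‖η‖^2/Real.sqrt (cσ^2*‖η‖^2+bν^2) from by ring, le_div_iff₀ hNpos]
    have h1 := mul_le_mul_of_nonneg_left hNub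
      (show (0:ℝ) ≤ (cσ+cμ)/2*‖η‖ by positivity)
    have h2 := mul_le_mul_of_nonneg_right hyb hy0.le
    nlinarith [h1, h2, mul_nonneg (abs_nonneg bν) hy0.le, sq_nonneg (cσ-cμ),
      mul_nonneg (mul_nonneg hd.le hd.le) (sq_nonneg ‖η‖)]
  have hGy : (cσ-cμ)/2*‖η‖ ≤ ‖G‖*‖η‖ := by linarith
  have hGlb : (cσ-cμ)/2 ≤ ‖G‖ := le_of_mul_le_mul_right hGy hy0
  have hzp := Aux14.zpow_facts ‖ξ-η‖ hr0
  have hΦ0 : (0:ℝ) ≤ |Phi3 cσ bσ cμ bμ cσ bν ξ η| := abs_nonneg _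
  have hstep : (cσ-cμ)/2*(1+‖ξ-η‖)^(-2:ℤ) ≤ (cσ-cμ)/2*1 :=
    mul_le_mul_of_nonneg_left hzp.2.2 (by linarith)
  linarith only [hstep, hGlb, hΦ0]

/-- High output frequency non-resonance: if the output frequency is large and
much larger than one input frequency, then `|Φ| + |∇_ηΦ| ≳ (1+|ξ−η|)^{−2}`. -/
theorem statement14 (cσ bσ cμ bμ cν bν : ℝ)
    (hcσ : 0 < cσ) (hcμ : 0 < cμ) (hcν : 0 < cν)
    (hbσ : bσ ≠ 0) (hbμ : bμ ≠ 0) (hbν : bν ≠ 0) :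
    ∃ C₀ : ℝ, 1 ≤ C₀ ∧ ∃ c₀ : ℝ, 0 < c₀ ∧
      ∀ ξ η : E3, C₀ ≤ ‖ξ‖ → C₀ * ‖ξ - η‖ ≤ ‖ξ‖ →
        c₀ * (1 + ‖ξ - η‖) ^ (-2 : ℤ) ≤
          |Phi3 cσ bσ cμ bμ cν bν ξ η| +
            ‖gradient (fun y => Phi3 cσ bσ cμ bμ cν bν ξ y) η‖ := by
  by_cases hss : Real.sign bσ = Real.sign bν
  · by_cases hcc : cσ = cν
    · rcases le_or_gt cν cμ with hcm | hcm
      · exact case_B2 cσ bσ cμ bμ cν bν hcσ hcμ hbσ hbμ hbν hss hcc hcm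
      · exact case_B3 cσ bσ cμ bμ cν bν hcσ hcμ hbσ hbμ hbν hcc hcm
    · exact case_B1 cσ bσ cμ bμ cν bν hcσ hcμ hcν hbσ hbμ hbν hss hcc
  · exact case_A cσ bσ cμ bμ cν bν hcσ hcμ hcν hbσ hbμ hbν hss
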